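/- Let ν > 0 and let n be an integer with n > e^ν. If X_1, …, X_n are (not necessarily independent) random variables each having the Poisson distribution with parameter ν, then E[ max_{1 ≤ i ≤ n} X_i ] ≤ log(n e^{-ν}) / W( log(n e^{-ν}) e^{-ν} ), where W is the Lambert W function. -/

import Mathlib

open MeasureTheory
open scoped ENNReal NNReal


lemma real_exp_tsum (x : ℝ) : ∑' k : ℕ, x ^ k / Nat.factorial k = Real.exp x := by
  rw [Real.exp_eq_exp_ℝ, NormedSpace.exp_eq_tsum_div]

lemma aux_tsum (ν r : ℝ) (hν : 0 ≤ ν) (hr : 0 ≤ r) :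
    ∑' k : ℕ, ENNReal.ofReal (r ^ k) *
      ENNReal.ofReal (Real.exp (-ν) * ν ^ k / Nat.factorial k) =
    ENNReal.ofReal (Real.exp (ν * r - ν)) := by
  have hsum : Summable (fun k : ℕ => Real.exp (-ν) * ((ν * r) ^ k / Nat.factorial k)) :=
    (Real.summable_pow_div_factorial (ν * r)).mul_left _
  have hterm : ∀ k : ℕ, ENNReal.ofReal (r ^ k) *
      ENNReal.ofReal (Real.exp (-ν) * ν ^ k / Nat.factorial k)
      = ENNReal.ofReal (Real.exp (-ν) * ((ν * r) ^ k / Nat.factorial k)) := by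
    intro k
    rw [← ENNReal.ofReal_mul (by positivity)]
    ring_nf
  simp_rw [hterm]
  rw [← ENNReal.ofReal_tsum_of_nonneg (fun k => by positivity) hsum]
  congr 1
  rw [tsum_mul_left, real_exp_tsum, ← Real.exp_add]
  ring_nf

lemma lint_exp {Ω : Type} [MeasurableSpace Ω] (P : Measure Ω) [IsProbabilityMeasure P]
    (f : Ω → ℕ) (hf : AEMeasurable f P) (lam ν : ℝ) (hν : 0 ≤ ν)
    (hX : ∀ k : ℕ, P {ω | f ω = k}
      = ENNReal.ofReal (Real.exp (-ν) * ν ^ k / Nat.factorial k)) :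
    ∫⁻ ω, ENNReal.ofReal (Real.exp (lam * f ω)) ∂P
      = ENNReal.ofReal (Real.exp (ν * Real.exp lam - ν)) := by
  set Y := hf.mk f with hY
  have hYm : Measurable Y := hf.measurable_mk
  have hae : f =ᵐ[P] Y := hf.ae_eq_mk
  have h1 : ∫⁻ ω, ENNReal.ofReal (Real.exp (lam * f ω)) ∂P
      = ∫⁻ ω, ENNReal.ofReal (Real.exp (lam * Y ω)) ∂P :=
    lintegral_congr_ae (hae.mono fun ω h => by simp only [h])
  have h2 : ∫⁻ ω, ENNReal.ofReal (Real.exp (lam * Y ω)) ∂P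
      = ∫⁻ k, ENNReal.ofReal (Real.exp (lam * k)) ∂(P.map Y) :=
    (lintegral_map (f := fun k : ℕ => ENNReal.ofReal (Real.exp (lam * (k:ℝ)))) measurable_from_nat hYm).symm
  have h3 : ∀ k : ℕ, (P.map Y) {k} = P {ω | f ω = k} := by
    intro k
    rw [Measure.map_apply hYm (measurableSet_singleton k)]
    apply measure_congr
    apply Filter.EventuallyEq.symm
    filter_upwards [hae] with ω h
    show (f ω = k) = (Y ω ∈ ({k} : Set ℕ))
    simp [h]
  rw [h1, h2, lintegral_countable' (fun k : ℕ => ENNReal.ofReal (Real.exp (lam * k)))]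
  have h4 : ∀ k : ℕ, ENNReal.ofReal (Real.exp (lam * k)) * (P.map Y) {k}
      = ENNReal.ofReal (Real.exp lam ^ k) *
        ENNReal.ofReal (Real.exp (-ν) * ν ^ k / Nat.factorial k) := by
    intro k
    rw [h3, hX, mul_comm lam (k : ℝ), Real.exp_nat_mul]
  simp_rw [h4]
  exact aux_tsum ν (Real.exp lam) hν (Real.exp_pos lam).le

lemma aemeas {Ω : Type} [MeasurableSpace Ω] (P : Measure Ω) [IsProbabilityMeasure P]
    (f : Ω → ℕ) (htot : ∑' k : ℕ, P {ω | f ω = k} = 1) : AEMeasurable f P := by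
  classical
  set s : ℕ → Set Ω := fun k => {ω | f ω = k} with hs
  set t : ℕ → Set Ω := fun k => toMeasurable P (s k) with ht
  have hst : ∀ k, s k ⊆ t k := fun k => subset_toMeasurable P (s k)
  have htm : ∀ k, MeasurableSet (t k) := fun k => measurableSet_toMeasurable P (s k)
  have htP : ∀ k, P (t k) = P (s k) := fun k => measure_toMeasurable (s k)
  have hnull : ∀ j k, j ≠ k → P (t j ∩ t k) = 0 := by
    intro j k hjk
    set g : ℕ → Set Ω := fun m => if m = j ∨ m = k then ∅ else s m with hg
    set R : ℝ≥0∞ := ∑' m, P (g m) with hR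
    have hsplit : P (s j) + (P (s k) + R) = 1 := by
      have hpt : ∀ m, P (s m) = (if m = j then P (s j) else 0) +
          ((if m = k then P (s k) else 0) + P (g m)) := by
        intro m
        by_cases h1 : m = j
        · subst h1; simp [hg, hjk]
        · by_cases h2 : m = k
          · subst h2; simp [hg, h1]
          · simp [hg, h1, h2]
      have hT : ∑' m, P (s m) = ∑' m, ((if m = j then P (s j) else 0) +
          ((if m = k then P (s k) else 0) + P (g m))) := tsum_congr hpt
      rw [ENNReal.tsum_add, ENNReal.tsum_add, tsum_ite_eq, tsum_ite_eq] at hT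
      rw [← htot, hT, hR]
    have hcover : (1 : ℝ≥0∞) ≤ P (t j ∪ t k) + R := by
      have hu : (Set.univ : Set Ω) ⊆ (t j ∪ t k) ∪ ⋃ m, g m := by
        intro ω _
        rcases eq_or_ne (f ω) j with h | h
        · exact Or.inl (Or.inl (hst j h))
        rcases eq_or_ne (f ω) k with h' | h'
        · exact Or.inl (Or.inr (hst k h'))
        · exact Or.inr (Set.mem_iUnion.2 ⟨f ω, by simp [hg, h, h', hs]⟩)
      calc (1 : ℝ≥0∞) = P Set.univ := (measure_univ).symm
        _ ≤ P ((t j ∪ t k) ∪ ⋃ m, g m) := measure_mono hu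
        _ ≤ P (t j ∪ t k) + P (⋃ m, g m) := measure_union_le _ _
        _ ≤ P (t j ∪ t k) + R := by gcongr; exact measure_iUnion_le g
    have hui : P (t j ∪ t k) + P (t j ∩ t k) = P (s j) + P (s k) := by
      rw [measure_union_add_inter _ (htm k), htP j, htP k]
    have hfin : P (t j ∪ t k) + R ≠ ∞ := by
      apply ENNReal.add_ne_top.2
      constructor
      · exact (measure_lt_top P _).ne
      · rw [hR]
        refine ne_top_of_le_ne_top ENNReal.one_ne_top ?_
        calc ∑' m, P (g m) ≤ ∑' m, P (s m) := by
              apply ENNReal.tsum_le_tsum; intro m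
              by_cases h : m = j ∨ m = k <;> simp [hg, h, measure_empty]
          _ = 1 := htot
    have : P (t j ∪ t k) + R + P (t j ∩ t k) ≤ P (t j ∪ t k) + R + 0 := by
      rw [add_zero]
      calc P (t j ∪ t k) + R + P (t j ∩ t k)
          = (P (t j ∪ t k) + P (t j ∩ t k)) + R := by ring
        _ = P (s j) + (P (s k) + R) := by rw [hui]; ring
        _ = 1 := hsplit
        _ ≤ P (t j ∪ t k) + R := hcover
    have h2 : P (t j ∩ t k) ≤ 0 := ENNReal.le_of_add_le_add_left hfin this
    exact le_antisymm h2 zero_le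
  have hsnull : ∀ k, NullMeasurableSet (s k) P := by
    intro k
    refine (htm k).nullMeasurableSet.congr ?_
    apply Filter.EventuallyEq.symm
    refine ae_eq_set.2 ?_
    constructor
    · simp [Set.diff_eq_empty.2 (hst k)]
    · have hsub : t k \ s k ⊆ ⋃ j, if j = k then ∅ else (t k ∩ t j) := by
        intro ω hω
        refine Set.mem_iUnion.2 ⟨f ω, ?_⟩
        have h1 : f ω ≠ k := fun h => hω.2 h
        simp only [h1, if_neg]
        exact ⟨hω.1, hst (f ω) rfl⟩
      refine measure_mono_null hsub ?_
      refine measure_iUnion_null fun j => ?_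
      by_cases h : j = k
      · simp [h]
      · simp [h, hnull k j (Ne.symm h)]
  have : NullMeasurable f P := by
    intro S _
    have : f ⁻¹' S = ⋃ k ∈ S, s k := by
      ext ω
      simp only [Set.mem_preimage, Set.mem_iUnion, Set.mem_setOf_eq, exists_prop, hs]
      constructor
      · intro h; exact ⟨f ω, h, rfl⟩
      · rintro ⟨k, hk, hfk⟩; rwa [hfk]
    rw [this]
    exact NullMeasurableSet.biUnion S.to_countable (fun k _ => hsnull k)
  exact this.aemeasurable


theorem stmt5 (ν : ℝ) (hν : 0 < ν) (n : ℕ) (hn : Real.exp ν < (n : ℝ))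
    (Ω : Type) [MeasurableSpace Ω] (P : Measure Ω) [IsProbabilityMeasure P]
    (X : Fin n → Ω → ℕ)
    (hX : ∀ (i : Fin n) (k : ℕ),
      P {ω | X i ω = k} = ENNReal.ofReal (Real.exp (-ν) * ν ^ k / Nat.factorial k))
    -- `w = W(log(n e^{-ν}) e^{-ν})`, i.e. the unique positive solution of `w e^w = a`
    (w : ℝ) (hw : 0 < w)
    (hwe : w * Real.exp w = Real.log ((n : ℝ) * Real.exp (-ν)) * Real.exp (-ν)) :
    ∫⁻ ω, ((Finset.univ.sup fun i => X i ω : ℕ) : ℝ≥0∞) ∂P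
      ≤ ENNReal.ofReal (Real.log ((n : ℝ) * Real.exp (-ν)) / w) := by
  -- basic positivity facts
  set L := Real.log ((n : ℝ) * Real.exp (-ν)) with hLdef
  have hn1 : (1 : ℝ) < (n : ℝ) * Real.exp (-ν) := by
    have h := mul_lt_mul_of_pos_right hn (Real.exp_pos (-ν))
    rwa [← Real.exp_add, add_neg_cancel, Real.exp_zero] at h
  have hL : 0 < L := Real.log_pos hn1
  have hexpL : Real.exp L = (n : ℝ) * Real.exp (-ν) :=
    Real.exp_log (lt_trans one_pos hn1)
  set lam := w + ν with hlamdef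
  have hlam : 0 < lam := by positivity
  set M := Real.exp lam with hMdef
  have hMpos : 0 < M := Real.exp_pos lam
  have hM : M = L / w := by
    have h1 : w * M = L := by
      rw [hMdef, hlamdef, Real.exp_add, ← mul_assoc, hwe, mul_assoc, ← Real.exp_add,
        neg_add_cancel, Real.exp_zero, mul_one]
    rw [eq_div_iff hw.ne', ← h1]
    ring
  have hwM : w * M = L := by rw [hM]; field_simp
  have hkey : (n : ℝ) * Real.exp (ν * M - ν) = Real.exp (lam * M) := by
    have h1 : lam * M = L + ν * M := by
      have h0 : lam * M = w * M + ν * M := by rw [hlamdef]; ring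
      rw [h0, hwM]
    rw [h1, Real.exp_add, hexpL]
    rw [show ν * M - ν = ν * M + (-ν) by ring, Real.exp_add]
    ring
  -- nonemptiness
  have hn0 : 0 < n := by
    have : (0 : ℝ) < n := lt_trans (Real.exp_pos ν) hn
    exact_mod_cast this
  haveI : NeZero n := ⟨hn0.ne'⟩
  -- AE measurability of each X i
  have htot1 : ∀ i : Fin n, ∑' k : ℕ, P {ω | X i ω = k} = 1 := by
    intro i
    simp_rw [hX i]
    have h := aux_tsum ν 1 hν.le zero_le_one
    simpa using h
  have hXae : ∀ i : Fin n, AEMeasurable (X i) P := fun i => aemeas P (X i) (htot1 i)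
  have hG : ∀ i : Fin n, ∫⁻ ω, ENNReal.ofReal (Real.exp (lam * X i ω)) ∂P
      = ENNReal.ofReal (Real.exp (ν * M - ν)) := fun i =>
    lint_exp P (X i) (hXae i) lam ν hν.le (hX i)
  -- pointwise bound
  set E := Real.exp (lam * M) with hEdef
  have hE : 0 < E := Real.exp_pos _
  have hpt : ∀ ω : Ω, ((Finset.univ.sup fun i => X i ω : ℕ) : ℝ≥0∞)
        + ENNReal.ofReal (1 / lam)
      ≤ ENNReal.ofReal M + ENNReal.ofReal (1 / (lam * E))
        * ∑ i : Fin n, ENNReal.ofReal (Real.exp (lam * X i ω)) := by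
    intro ω
    set m : ℕ := Finset.univ.sup fun i => X i ω with hmdef
    have hsum_exp : Real.exp (lam * m) ≤ ∑ i : Fin n, Real.exp (lam * X i ω) := by
      obtain ⟨i, _, hi⟩ := Finset.exists_mem_eq_sup Finset.univ Finset.univ_nonempty
        (fun i => X i ω)
      rw [← hmdef] at hi
      rw [hi]
      exact Finset.single_le_sum (f := fun i : Fin n => Real.exp (lam * (X i ω : ℝ)))
        (fun j _ => (Real.exp_pos _).le) (Finset.mem_univ i)
    have hreal : (m : ℝ) + 1 / lam
        ≤ M + (∑ i : Fin n, Real.exp (lam * X i ω)) / (lam * E) := by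
      have h1 : lam * m - lam * M + 1 ≤ Real.exp (lam * m) / E := by
        rw [hEdef, ← Real.exp_sub]
        linarith [Real.add_one_le_exp (lam * m - lam * M)]
      have h2 : ((m : ℝ) + 1 / lam - M) * lam ≤ Real.exp (lam * m) / E := by
        calc ((m : ℝ) + 1 / lam - M) * lam = lam * m - lam * M + 1 := by
              field_simp; ring
          _ ≤ _ := h1
      have h3 : (m : ℝ) + 1 / lam - M ≤ Real.exp (lam * m) / (lam * E) := by
        rw [mul_comm lam E, div_mul_eq_div_div, le_div_iff₀ hlam]
        exact h2
      have h4 : Real.exp (lam * m) / (lam * E)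
          ≤ (∑ i : Fin n, Real.exp (lam * X i ω)) / (lam * E) := by
        gcongr
      linarith
    calc ((m : ℕ) : ℝ≥0∞) + ENNReal.ofReal (1 / lam)
        = ENNReal.ofReal ((m : ℝ) + 1 / lam) := by
          rw [ENNReal.ofReal_add (by positivity) (by positivity), ENNReal.ofReal_natCast]
      _ ≤ ENNReal.ofReal (M + (∑ i : Fin n, Real.exp (lam * X i ω)) / (lam * E)) :=
          ENNReal.ofReal_le_ofReal hreal
      _ = ENNReal.ofReal M + ENNReal.ofReal (1 / (lam * E))
            * ∑ i : Fin n, ENNReal.ofReal (Real.exp (lam * X i ω)) := by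
          rw [ENNReal.ofReal_add hMpos.le (by positivity)]
          congr 1
          rw [div_eq_mul_inv, mul_comm _ (lam * E)⁻¹, ← one_div,
            ENNReal.ofReal_mul (by positivity),
            ENNReal.ofReal_sum_of_nonneg (fun i _ => (Real.exp_pos _).le)]
  -- integrate
  have main : (∫⁻ ω, ((Finset.univ.sup fun i => X i ω : ℕ) : ℝ≥0∞) ∂P)
        + ENNReal.ofReal (1 / lam)
      ≤ ENNReal.ofReal M + ENNReal.ofReal (1 / lam) := by
    have hstep1 : (∫⁻ ω, ((Finset.univ.sup fun i => X i ω : ℕ) : ℝ≥0∞) ∂P)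
          + ENNReal.ofReal (1 / lam)
        = ∫⁻ ω, (((Finset.univ.sup fun i => X i ω : ℕ) : ℝ≥0∞)
            + ENNReal.ofReal (1 / lam)) ∂P := by
      rw [lintegral_add_right _ measurable_const, lintegral_const, measure_univ, mul_one]
    rw [hstep1]
    calc ∫⁻ ω, (((Finset.univ.sup fun i => X i ω : ℕ) : ℝ≥0∞)
            + ENNReal.ofReal (1 / lam)) ∂P
        ≤ ∫⁻ ω, (ENNReal.ofReal M + ENNReal.ofReal (1 / (lam * E))
            * ∑ i : Fin n, ENNReal.ofReal (Real.exp (lam * X i ω))) ∂P :=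
          lintegral_mono hpt
      _ = ENNReal.ofReal M + ENNReal.ofReal (1 / (lam * E))
            * ∑ i : Fin n, ∫⁻ ω, ENNReal.ofReal (Real.exp (lam * X i ω)) ∂P := by
          rw [lintegral_add_left measurable_const, lintegral_const, measure_univ, mul_one,
            lintegral_const_mul' _ _ ENNReal.ofReal_ne_top,
            lintegral_finset_sum'
              (f := fun (i : Fin n) (ω : Ω) => ENNReal.ofReal (Real.exp (lam * (X i ω : ℝ))))
              Finset.univ (fun i _ => by
                exact Measurable.comp_aemeasurable
                  (g := fun k : ℕ => ENNReal.ofReal (Real.exp (lam * (k : ℝ))))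
                  (f := X i) measurable_from_nat (hXae i))]
      _ = ENNReal.ofReal M + ENNReal.ofReal (1 / (lam * E))
            * ((n : ℝ≥0∞) * ENNReal.ofReal (Real.exp (ν * M - ν))) := by
          simp_rw [hG]
          rw [Finset.sum_const, Finset.card_univ, Fintype.card_fin, nsmul_eq_mul]
      _ = ENNReal.ofReal M + ENNReal.ofReal (1 / lam) := by
          congr 1
          rw [← ENNReal.ofReal_natCast n, ← ENNReal.ofReal_mul (by positivity),
            hkey, ← ENNReal.ofReal_mul (by positivity)]
          congr 1
          field_simp
  have hfin : ENNReal.ofReal (1 / lam) ≠ ∞ := ENNReal.ofReal_ne_top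
  have hfinal : (∫⁻ ω, ((Finset.univ.sup fun i => X i ω : ℕ) : ℝ≥0∞) ∂P)
      ≤ ENNReal.ofReal M := (ENNReal.add_le_add_iff_right hfin).mp main
  rwa [hM] at hfinal
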